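/- Let F: (0,∞) → [0,∞) be continuous and non-decreasing with F(ρ) = O(ρ²) as ρ → 0, such that F has a left-derivative F'(ρ) at every ρ with F(ρ) < 1, and suppose that for every such ρ and every T > 0 one has F(ρ·e^{−T}) ≥ (1/2)·e^{−2T}·ρ·F'(ρ). Define c := (1/2)·sup{F'(ρ)/ρ : F(ρ) < 1}. Then c < ∞, lim_{ρ→0} F(ρ)/ρ² = c, and c = (1/2)·limsup_{ρ→0} F'(ρ)/ρ. -/

import Mathlib

open Set Filter Topology

/-- MVT with left derivatives via mirroring. -/
lemma mvt_left_quad {F F' : ℝ → ℝ} {a b r : ℝ} (hab : a < b)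
    (hcont : ContinuousOn F (Icc a b))
    (hder : ∀ x ∈ Ioc a b, HasDerivWithinAt F (F' x) (Iio x) x)
    (hbound : ∀ x ∈ Ioc a b, F' x ≤ r * x) :
    F b - F a ≤ r / 2 * (b ^ 2 - a ^ 2) := by
  set g : ℝ → ℝ := fun x => -F (-x) with hg
  set B : ℝ → ℝ := fun x => -F b + r / 2 * (b ^ 2 - x ^ 2) with hB
  have hgc : ContinuousOn g (Icc (-b) (-a)) := by
    have : ContinuousOn (fun x : ℝ => F (-x)) (Icc (-b) (-a)) := by
      apply hcont.comp (continuous_neg.continuousOn)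
      intro x hx
      simp only [mem_Icc] at hx ⊢
      constructor <;> linarith [hx.1, hx.2]
    exact this.neg
  have hgd : ∀ x ∈ Ico (-b) (-a), HasDerivWithinAt g (F' (-x)) (Ici x) x := by
    intro x hx
    have hx' : -x ∈ Ioc a b := by
      simp only [mem_Ico] at hx
      constructor <;> linarith [hx.1, hx.2]
    have h1 : HasDerivWithinAt F (F' (-x)) (Iic (-x)) (-x) := (hder _ hx').Iic_of_Iio
    have hneg : HasDerivWithinAt (fun y : ℝ => -y) (-1) (Ici x) x :=
      (hasDerivAt_neg x).hasDerivWithinAt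
    have hmaps : MapsTo (fun y : ℝ => -y) (Ici x) (Iic (-x)) := fun y hy => by
      simp only [mem_Ici] at hy; simp only [mem_Iic]; linarith
    have hcomp := HasDerivWithinAt.comp x h1 hneg hmaps
    have h2 : HasDerivWithinAt g (-(F' (-x) * -1)) (Ici x) x := hcomp.neg
    convert h2 using 1
    ring
  have ha : g (-b) ≤ B (-b) := by simp [hg, hB]
  have hBc : ContinuousOn B (Icc (-b) (-a)) := by fun_prop
  have hBd : ∀ x ∈ Ico (-b) (-a), HasDerivWithinAt B (-(r * x)) (Ici x) x := by
    intro x _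
    have h3 : HasDerivAt B (r / 2 * -((2:ℕ) * x ^ (2-1))) x := by
      apply HasDerivAt.const_add
      exact ((hasDerivAt_pow 2 x).const_sub _).const_mul _
    have h2 : r / 2 * -((2:ℕ) * x ^ (2-1)) = -(r * x) := by push_cast; ring
    rw [h2] at h3
    exact h3.hasDerivWithinAt
  have hbd : ∀ x ∈ Ico (-b) (-a), F' (-x) ≤ -(r * x) := by
    intro x hx
    have hx' : -x ∈ Ioc a b := by
      simp only [mem_Ico] at hx
      constructor <;> linarith [hx.1, hx.2]
    have := hbound _ hx'
    linarith
  have key := image_le_of_deriv_right_le_deriv_boundary hgc hgd ha hBc hBd hbd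
    (x := -a) (by simp [hab.le])
  simp only [hg, hB, neg_neg] at key
  linarith

theorem stmt16 (F F' : ℝ → ℝ)
    (hcont : ContinuousOn F (Set.Ioi 0))
    (hmono : MonotoneOn F (Set.Ioi 0))
    (hnonneg : ∀ ρ > (0:ℝ), 0 ≤ F ρ)
    (hO : ∃ C₀ > (0:ℝ), ∃ ε > (0:ℝ), ∀ ρ ∈ Set.Ioo (0:ℝ) ε, F ρ ≤ C₀ * ρ ^ 2)
    (hderiv : ∀ ρ > (0:ℝ), F ρ < 1 → HasDerivWithinAt F (F' ρ) (Set.Iio ρ) ρ)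
    (hineq : ∀ ρ > (0:ℝ), F ρ < 1 → ∀ T > (0:ℝ),
      (1 / 2) * Real.exp (-(2 * T)) * ρ * F' ρ ≤ F (ρ * Real.exp (-T))) :
    BddAbove {x : ℝ | ∃ ρ > (0:ℝ), F ρ < 1 ∧ x = F' ρ / ρ} ∧
    Filter.Tendsto (fun ρ => F ρ / ρ ^ 2) (nhdsWithin 0 (Set.Ioi 0))
      (nhds ((1 / 2) * sSup {x : ℝ | ∃ ρ > (0:ℝ), F ρ < 1 ∧ x = F' ρ / ρ})) ∧
    (1 / 2) * sSup {x : ℝ | ∃ ρ > (0:ℝ), F ρ < 1 ∧ x = F' ρ / ρ}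
      = (1 / 2) * Filter.limsup (fun ρ => F' ρ / ρ) (nhdsWithin 0 (Set.Ioi 0)) := by
  obtain ⟨C₀, hC₀, ε, hε, hOb⟩ := hO
  set S := {x : ℝ | ∃ ρ > (0:ℝ), F ρ < 1 ∧ x = F' ρ / ρ} with hSdef
  set ρ₁ := min ε (Real.sqrt C₀)⁻¹ with hρ₁def
  have hsC : 0 < Real.sqrt C₀ := Real.sqrt_pos.2 hC₀
  have hρ₁pos : 0 < ρ₁ := lt_min hε (by positivity)
  have hρ₁ε : ρ₁ ≤ ε := min_le_left _ _
  -- small ρ have F ρ < 1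
  have hlt1 : ∀ ρ : ℝ, 0 < ρ → ρ < ρ₁ → F ρ < 1 := by
    intro ρ h0 h1
    have hρε : ρ < ε := lt_of_lt_of_le h1 hρ₁ε
    have hO' := hOb ρ ⟨h0, hρε⟩
    have h2 : ρ < (Real.sqrt C₀)⁻¹ := lt_of_lt_of_le h1 (min_le_right _ _)
    rw [inv_eq_one_div] at h2
    have h3 : ρ * Real.sqrt C₀ < 1 := (lt_div_iff₀ hsC).mp h2
    nlinarith [Real.sq_sqrt hC₀.le, mul_nonneg h0.le hsC.le]
  -- nonneg of left derivative
  have hF'nonneg : ∀ ρ : ℝ, 0 < ρ → F ρ < 1 → 0 ≤ F' ρ := by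
    intro ρ h0 h1
    have hd := hderiv ρ h0 h1
    rw [hasDerivWithinAt_iff_tendsto_slope] at hd
    have hset : Iio ρ \ {ρ} = Iio ρ := diff_singleton_eq_self (by simp)
    rw [hset] at hd
    refine ge_of_tendsto hd ?_
    have hpos : ∀ᶠ z in 𝓝[<] ρ, z ∈ Ioo (0:ℝ) ρ := by
      apply Ioo_mem_nhdsLT_of_mem
      exact ⟨h0, le_refl ρ⟩
    filter_upwards [hpos] with z hz
    have hFz : F z ≤ F ρ := hmono (mem_Ioi.2 hz.1) (mem_Ioi.2 h0) hz.2.le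
    rw [slope_def_field]
    exact div_nonneg_iff.2 (Or.inr ⟨by linarith, by linarith [hz.2]⟩)
  -- Lemma A : ρ F' ρ ≤ 2 F ρ
  have hA : ∀ ρ : ℝ, 0 < ρ → F ρ < 1 → ρ * F' ρ ≤ 2 * F ρ := by
    intro ρ h0 h1
    have ht : Tendsto (fun T : ℝ => (1/2) * Real.exp (-(2*T)) * ρ * F' ρ) (𝓝[>] 0)
        (𝓝 ((1/2) * Real.exp (-(2*0)) * ρ * F' ρ)) := by
      have hc2 : Continuous fun T : ℝ => (1/2) * Real.exp (-(2*T)) * ρ * F' ρ := by fun_prop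
      exact (hc2.tendsto 0).mono_left nhdsWithin_le_nhds
    have hle : ∀ᶠ T in 𝓝[>] (0:ℝ), (1/2) * Real.exp (-(2*T)) * ρ * F' ρ ≤ F ρ := by
      filter_upwards [self_mem_nhdsWithin] with T hT
      refine le_trans (hineq ρ h0 h1 T hT) ?_
      have he1 : Real.exp (-T) ≤ 1 := Real.exp_le_one_iff.2 (by linarith [mem_Ioi.1 hT])
      have he0 : 0 < Real.exp (-T) := Real.exp_pos _
      refine hmono (mem_Ioi.2 (by positivity)) (mem_Ioi.2 h0) ?_
      nlinarith
    have := le_of_tendsto ht hle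
    simp only [mul_zero, neg_zero, Real.exp_zero] at this
    linarith
  -- membership and nonemptiness
  have hmem : ∀ ρ : ℝ, 0 < ρ → ρ < ρ₁ → F' ρ / ρ ∈ S := by
    intro ρ h0 h1
    exact ⟨ρ, h0, hlt1 ρ h0 h1, rfl⟩
  have hSne : S.Nonempty := ⟨F' (ρ₁/2) / (ρ₁/2), hmem _ (by positivity) (by linarith)⟩
  -- bounded above
  have hbdd : BddAbove S := by
    refine ⟨max (2*C₀) (2/ρ₁^2), ?_⟩
    rintro x ⟨ρ, h0, h1, rfl⟩
    have hA' := hA ρ h0 h1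
    have hnn := hF'nonneg ρ h0 h1
    by_cases hc : ρ < ρ₁
    · refine le_trans ?_ (le_max_left _ _)
      have hO' := hOb ρ ⟨h0, lt_of_lt_of_le hc hρ₁ε⟩
      rw [div_le_iff₀ h0]
      nlinarith
    · refine le_trans ?_ (le_max_right _ _)
      push_neg at hc
      rw [div_le_div_iff₀ h0 (by positivity)]
      nlinarith [hnonneg ρ h0]
  -- Lemma B : lower bound at smaller points
  have hLB : ∀ ρ : ℝ, 0 < ρ → F ρ < 1 → ∀ s : ℝ, 0 < s → s < ρ →
      F' ρ / ρ * s^2 / 2 ≤ F s := by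
    intro ρ h0 h1 s hs hsρ
    have hT : 0 < Real.log (ρ/s) := Real.log_pos (by rw [lt_div_iff₀ hs]; linarith)
    have he : Real.exp (-(Real.log (ρ/s))) = s/ρ := by
      rw [Real.exp_neg, Real.exp_log (by positivity), inv_div]
    have key := hineq ρ h0 h1 _ hT
    have he2 : Real.exp (-(2*Real.log (ρ/s))) = (s/ρ)^2 := by
      have h4 : -(2*Real.log (ρ/s)) = -(Real.log (ρ/s)) + -(Real.log (ρ/s)) := by ring
      rw [h4, Real.exp_add, he]; ring
    rw [he, he2] at key
    have h5 : ρ * (s/ρ) = s := by field_simp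
    rw [h5] at key
    calc F' ρ / ρ * s^2 / 2 = 1/2 * (s/ρ)^2 * ρ * F' ρ := by field_simp
      _ ≤ F s := key
  -- upper bound machine
  have hupper : ∀ r : ℝ, 0 ≤ r → ∀ ρ₂ : ℝ, 0 < ρ₂ → ρ₂ ≤ ρ₁ →
      (∀ t : ℝ, 0 < t → t < ρ₂ → F' t ≤ r * t) →
      ∀ s : ℝ, 0 < s → s < ρ₂ → F s ≤ r/2 * s^2 := by
    intro r hr ρ₂ h2 h21 hbd s hs hsρ
    have key : ∀ a : ℝ, 0 < a → a < s → F s ≤ r/2 * s^2 + C₀ * a^2 := by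
      intro a ha has
      have hsub : Icc a s ⊆ Ioi 0 := fun x hx => lt_of_lt_of_le ha hx.1
      have hmvt := mvt_left_quad (F := F) (F' := F') has (hcont.mono hsub)
        (fun x hx => hderiv x (lt_trans ha hx.1)
          (hlt1 x (lt_trans ha hx.1) (lt_of_le_of_lt hx.2 (lt_of_lt_of_le hsρ h21))))
        (fun x hx => hbd x (lt_trans ha hx.1) (lt_of_le_of_lt hx.2 hsρ))
      have hFa : F a ≤ C₀ * a^2 :=
        hOb a ⟨ha, lt_of_lt_of_le (lt_trans has (lt_of_lt_of_le hsρ h21)) hρ₁ε⟩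
      nlinarith [sq_nonneg a, mul_nonneg hr (sq_nonneg a)]
    have htend : Tendsto (fun a : ℝ => r/2 * s^2 + C₀ * a^2) (𝓝[>] 0)
        (𝓝 (r/2 * s^2 + C₀ * 0^2)) := by
      have hc2 : Continuous fun a : ℝ => r/2 * s^2 + C₀ * a^2 := by fun_prop
      exact (hc2.tendsto 0).mono_left nhdsWithin_le_nhds
    have hle : F s ≤ r/2 * s^2 + C₀ * 0^2 := by
      refine ge_of_tendsto htend ?_
      filter_upwards [Ioo_mem_nhdsGT hs] with a ha
      exact key a ha.1 ha.2
    simpa using hle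
  set L := sSup S with hLdef
  have hL0 : 0 ≤ L := by
    have hx := hmem (ρ₁/2) (by positivity) (by linarith)
    have := le_csSup hbdd hx
    have h0 : (0:ℝ) ≤ F' (ρ₁/2) / (ρ₁/2) :=
      div_nonneg (hF'nonneg _ (by positivity) (hlt1 _ (by positivity) (by linarith)))
        (by positivity)
    linarith
  have hFle : ∀ s : ℝ, 0 < s → s < ρ₁ → F s ≤ L/2 * s^2 := by
    refine hupper L hL0 ρ₁ hρ₁pos le_rfl ?_
    intro t ht htρ
    have hm : F' t / t ≤ L := le_csSup hbdd (hmem t ht htρ)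
    rw [div_le_iff₀ ht] at hm
    linarith
  have htendsto : Tendsto (fun ρ => F ρ / ρ^2) (𝓝[>] (0:ℝ)) (𝓝 (1/2 * L)) := by
    rw [tendsto_order]
    constructor
    · intro b hb
      have h2b : 2*b < L := by linarith
      obtain ⟨x, hxS, hbx⟩ := exists_lt_of_lt_csSup hSne h2b
      obtain ⟨ρ, h0, h1, rfl⟩ := hxS
      filter_upwards [Ioo_mem_nhdsGT h0] with s hsmem
      have hl := hLB ρ h0 h1 s hsmem.1 hsmem.2
      rw [lt_div_iff₀ (pow_pos hsmem.1 2)]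
      nlinarith [mul_pos (sub_pos.2 hbx) (pow_pos hsmem.1 2)]
    · intro b hb
      filter_upwards [Ioo_mem_nhdsGT hρ₁pos] with s hsmem
      have := hFle s hsmem.1 hsmem.2
      rw [div_lt_iff₀ (pow_pos hsmem.1 2)]
      nlinarith [mul_pos (sub_pos.2 hb) (pow_pos hsmem.1 2)]
  -- limsup equality
  have hev : ∀ᶠ t in 𝓝[>] (0:ℝ), 0 ≤ F' t / t ∧ F' t / t ≤ L := by
    filter_upwards [Ioo_mem_nhdsGT hρ₁pos] with t ht
    exact ⟨div_nonneg (hF'nonneg t ht.1 (hlt1 t ht.1 ht.2)) ht.1.le,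
      le_csSup hbdd (hmem t ht.1 ht.2)⟩
  have hbddU : IsBoundedUnder (· ≤ ·) (𝓝[>] (0:ℝ)) (fun t => F' t / t) :=
    ⟨L, hev.mono fun t h => h.2⟩
  have hbddL : IsBoundedUnder (· ≥ ·) (𝓝[>] (0:ℝ)) (fun t => F' t / t) :=
    ⟨0, hev.mono fun t h => h.1⟩
  have hls1 : limsup (fun t => F' t / t) (𝓝[>] (0:ℝ)) ≤ L :=
    limsup_le_of_le hbddL.isCoboundedUnder_flip (hev.mono fun t h => h.2)
  have hls2 : L ≤ limsup (fun t => F' t / t) (𝓝[>] (0:ℝ)) := by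
    by_contra hcon
    push_neg at hcon
    obtain ⟨r, hr1, hr2⟩ := exists_between hcon
    have hr0 : 0 ≤ r := by
      have := le_limsup_of_frequently_le ((hev.mono fun t h => h.1).frequently) hbddU
      linarith
    have hev2 : {a : ℝ | F' a / a < r} ∈ 𝓝[>] (0:ℝ) :=
      eventually_lt_of_limsup_lt hr1 hbddU
    obtain ⟨u, hu, hsub⟩ := mem_nhdsGT_iff_exists_Ioo_subset.1 hev2
    set ρ₂ := min u ρ₁ with hρ₂def
    have hρ₂pos : 0 < ρ₂ := lt_min (mem_Ioi.1 hu) hρ₁pos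
    have hb : ∀ t : ℝ, 0 < t → t < ρ₂ → F' t ≤ r * t := by
      intro t ht h
      have : F' t / t < r := hsub ⟨ht, lt_of_lt_of_le h (min_le_left _ _)⟩
      rw [div_lt_iff₀ ht] at this
      linarith
    have hup := hupper r hr0 ρ₂ hρ₂pos (min_le_right _ _) hb
    obtain ⟨x, hxS, hrx⟩ := exists_lt_of_lt_csSup hSne hr2
    obtain ⟨ρ, h0, h1', rfl⟩ := hxS
    set s := min ρ ρ₂ / 2 with hsdef
    have hs0 : 0 < s := by positivity
    have hsρ : s < ρ := by
      have := min_le_left ρ ρ₂; simp only [hsdef]; linarith [lt_min h0 hρ₂pos]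
    have hsρ₂ : s < ρ₂ := by
      have := min_le_right ρ ρ₂; simp only [hsdef]; linarith [lt_min h0 hρ₂pos]
    have hl := hLB ρ h0 h1' s hs0 hsρ
    have hu' := hup s hs0 hsρ₂
    nlinarith [mul_pos (sub_pos.2 hrx) (pow_pos hs0 2)]
  refine ⟨hbdd, htendsto, ?_⟩
  rw [le_antisymm hls2 hls1]
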